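/- Let N ≥ 1 and let D₁, D₃ be real N×N skew-symmetric matrices (Dᵀ = −D). If u : ℝ → ℝᴺ is differentiable and satisfies the split-form Korteweg–de Vries semidiscretization ∂_t u + (1/3)(D₁(u ∘ u) + u ∘ (D₁ u)) + D₃ u = 0, where ∘ denotes elementwise (Hadamard) multiplication, then the total energy (1/2)Σ_{i=1}^{N} u_i(t)² is constant in t. -/

import Mathlib

open Matrix

lemma skew_dot {N : ℕ} (M : Matrix (Fin N) (Fin N) ℝ) (hM : M.transpose = -M)
    (x y : Fin N → ℝ) : x ⬝ᵥ M.mulVec y = - (M.mulVec x ⬝ᵥ y) := by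
  have hx : x ᵥ* M = -(M *ᵥ x) := by
    have : M = -M.transpose := by rw [hM, neg_neg]
    rw [this, Matrix.vecMul_neg, Matrix.vecMul_transpose]
    simp [hM]
  rw [Matrix.dotProduct_mulVec, hx, neg_dotProduct]

lemma skew_quad {N : ℕ} (M : Matrix (Fin N) (Fin N) ℝ) (hM : M.transpose = -M)
    (x : Fin N → ℝ) : x ⬝ᵥ M.mulVec x = 0 := by
  have h := skew_dot M hM x x
  have h2 : M.mulVec x ⬝ᵥ x = x ⬝ᵥ M.mulVec x := dotProduct_comm _ _
  linarith [h, h2]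

lemma hadamard_dot {N : ℕ} (x y z : Fin N → ℝ) : x ⬝ᵥ (y * z) = (x * y) ⬝ᵥ z := by
  simp [dotProduct, Pi.mul_apply, mul_assoc]

/-- For skew-symmetric derivative matrices `D₁`, `D₃`, the split-form KdV
semidiscretization `∂ₜ u + (1/3)(D₁(u∘u) + u∘(D₁u)) + D₃ u = 0` conserves the total
energy `(1/2)∑ᵢ uᵢ(t)²`. -/
theorem kdv_split_form_energy_conservation
    (N : ℕ) (hN : 1 ≤ N) (D₁ D₃ : Matrix (Fin N) (Fin N) ℝ)
    (h1skew : D₁.transpose = -D₁) (h3skew : D₃.transpose = -D₃)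
    (u : ℝ → Fin N → ℝ)
    (hu : ∀ t : ℝ, HasDerivAt u
      (-((1 / 3 : ℝ) • (D₁.mulVec (u t * u t) + u t * D₁.mulVec (u t)) + D₃.mulVec (u t))) t)
    (t : ℝ) :
    (1 / 2) * ∑ i, u t i ^ 2 = (1 / 2) * ∑ i, u 0 i ^ 2 := by
  set g : ℝ → ℝ := fun s => (1 / 2) * ∑ i, u s i ^ 2 with hg
  have key : ∀ s : ℝ, HasDerivAt g 0 s := by
    intro s
    set v : Fin N → ℝ :=
      -((1 / 3 : ℝ) • (D₁.mulVec (u s * u s) + u s * D₁.mulVec (u s)) + D₃.mulVec (u s)) with hv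
    have hcomp : ∀ i, HasDerivAt (fun r => u r i) (v i) s := fun i =>
      (hasDerivAt_pi.mp (hu s)) i
    have hsum : HasDerivAt (fun r => ∑ i, u r i ^ 2)
        (∑ i : Fin N, (2 : ℕ) * u s i ^ (2 - 1) * v i) s := by
      apply HasDerivAt.fun_sum
      intro i _
      exact (hcomp i).pow 2
    have hzero : (1 / 2 : ℝ) * ∑ i : Fin N, (2 : ℕ) * u s i ^ (2 - 1) * v i = 0 := by
      have hs : ∑ i : Fin N, (2 : ℕ) * u s i ^ (2 - 1) * v i = 2 * (u s ⬝ᵥ v) := by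
        rw [dotProduct, Finset.mul_sum]
        apply Finset.sum_congr rfl
        intro i _
        push_cast
        ring
      rw [hs]
      have hdv : u s ⬝ᵥ v = 0 := by
        rw [hv]
        rw [dotProduct_neg, dotProduct_add, dotProduct_smul,
          dotProduct_add, skew_quad D₃ h3skew]
        have h1 : u s ⬝ᵥ D₁.mulVec (u s * u s) = -(D₁.mulVec (u s) ⬝ᵥ (u s * u s)) :=
          skew_dot D₁ h1skew _ _
        have h2 : u s ⬝ᵥ (u s * D₁.mulVec (u s)) = (u s * u s) ⬝ᵥ D₁.mulVec (u s) :=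
          hadamard_dot _ _ _
        rw [h1, h2, dotProduct_comm (u s * u s)]
        simp
      rw [hdv]; ring
    have := (hsum.const_mul (1 / 2 : ℝ))
    rw [hzero] at this
    exact this
  have hconst : g t = g 0 := by
    have hdiff : Differentiable ℝ g := fun s => (key s).differentiableAt
    have hderiv : ∀ s, deriv g s = 0 := fun s => (key s).deriv
    exact is_const_of_deriv_eq_zero hdiff hderiv t 0
  exact hconst
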